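/- Let K be a number field with ring of integers O_K, let A be an m×m matrix with entries in K, and let T be an invertible m×m matrix with entries in K. Suppose A satisfies the condition of cancellation of factorials with constant Ψ ≥ 1, i.e. there exist positive integers (ψ_k)_{k∈ℕ} such that all entries of ψ_k·⟨A⟩_n/n! lie in O_K for all 0 ≤ n ≤ k and limsup_{k→∞} ψ_k^{1/k} ≤ Ψ. Then the matrix T·A·T^{−1} also satisfies the condition of cancellation of factorials with the same constant Ψ: there exist positive integers (ψ′_k)_{k∈ℕ} (one may take ψ′_k = t_1 t_2 ψ_k, where t_1, t_2 are least common denominators of the entries of T and T^{−1} respectively) such that all entries of ψ′_k·⟨TAT^{−1}⟩_n/n! lie in O_K for all 0 ≤ n ≤ k and limsup_{k→∞} (ψ′_k)^{1/k} ≤ Ψ. -/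

import Mathlib

/-- The falling factorial `⟨a⟩_n = a(a-1)⋯(a-n+1)` in a (possibly noncommutative) ring;
for a square matrix `A` this is `⟨A⟩_n = A(A-I)⋯(A-(n-1)I)`. -/
def fall {R : Type*} [Ring R] (a : R) : ℕ → R
  | 0 => 1
  | n + 1 => fall a n * (a - (n : R))

lemma fall_conj {m : ℕ} {K : Type*} [Field K] (A T : Matrix (Fin m) (Fin m) K)
    (hT : IsUnit T.det) (n : ℕ) :
    fall (T * A * T⁻¹) n = T * fall A n * T⁻¹ := by
  induction n with
  | zero => simp [fall, Matrix.mul_nonsing_inv T hT]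
  | succ n ih =>
      have h1 : T⁻¹ * T = 1 := Matrix.nonsing_inv_mul T hT
      have h2 : (n : Matrix (Fin m) (Fin m) K) = T * (n : Matrix (Fin m) (Fin m) K) * T⁻¹ := by
        have h3 : (n : Matrix (Fin m) (Fin m) K) = (n : K) • (1 : Matrix (Fin m) (Fin m) K) := by
          simp [Matrix.smul_one_eq_diagonal]; norm_cast
        rw [h3, Matrix.mul_smul, Matrix.smul_mul, mul_one, Matrix.mul_nonsing_inv T hT]
      rw [fall, fall, ih]
      calc T * fall A n * T⁻¹ * (T * A * T⁻¹ - n)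
          = T * fall A n * T⁻¹ * (T * A * T⁻¹ - T * (n : Matrix (Fin m) (Fin m) K) * T⁻¹) := by
            rw [← h2]
        _ = T * fall A n * T⁻¹ * (T * (A - n) * T⁻¹) := by
            congr 1
            rw [Matrix.mul_sub, Matrix.sub_mul]
        _ = T * (fall A n * (A - n)) * T⁻¹ := by
            simp only [Matrix.mul_assoc]
            rw [← Matrix.mul_assoc T⁻¹ T, h1, Matrix.one_mul]

lemma exists_denom {m : ℕ} {K : Type*} [Field K] [NumberField K]
    (M : Matrix (Fin m) (Fin m) K) :
    ∃ d : ℕ, 0 < d ∧ ∀ i j, IsIntegral ℤ ((d : K) * M i j) := by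
  classical
  obtain ⟨y, hy, h⟩ := exists_integral_multiples ℤ ℚ
    ((Finset.univ : Finset (Fin m × Fin m)).image fun p => M p.1 p.2)
  refine ⟨y.natAbs, Int.natAbs_pos.mpr hy, fun i j => ?_⟩
  have hint : IsIntegral ℤ (y • M i j) := h _ (Finset.mem_image.2 ⟨(i, j), Finset.mem_univ _, rfl⟩)
  have key : ((y.natAbs : ℕ) : K) * M i j = ((y.natAbs : ℤ) : K) * M i j := by rw [Int.cast_natCast]
  rw [key]
  rcases Int.natAbs_eq y with he | he
  · rw [← he]
    simpa [zsmul_eq_mul] using hint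
  · have h4 : (y.natAbs : ℤ) = -y := by omega
    rw [h4]
    push_cast
    simpa [zsmul_eq_mul, neg_mul] using hint.neg

lemma tendsto_const_rpow_one_div (c : ℝ) (hc : 0 < c) :
    Filter.Tendsto (fun k : ℕ => c ^ (1 / (k : ℝ))) Filter.atTop (nhds 1) := by
  have h1 : Filter.Tendsto (fun k : ℕ => Real.log c * (1 / (k : ℝ))) Filter.atTop (nhds 0) := by
    simpa using (tendsto_one_div_atTop_nhds_zero_nat.const_mul (Real.log c))
  have h2 := (Real.continuous_exp.tendsto 0).comp h1
  simp only [Real.exp_zero] at h2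
  refine h2.congr fun k => ?_
  simp [Real.rpow_def_of_pos hc, mul_comm]


/-- if a square matrix `A` over a number field `K` satisfies the condition of
cancellation of factorials with constant `Ψ ≥ 1`, then so does `T·A·T⁻¹` for any invertible
matrix `T` over `K`. -/
theorem stmt_6 (K : Type*) [Field K] [NumberField K] {m : ℕ}
    (A T : Matrix (Fin m) (Fin m) K) (hT : IsUnit T.det)
    (Ψ : ℝ) (hΨ : 1 ≤ Ψ)
    (ψ : ℕ → ℕ) (hpos : ∀ k, 0 < ψ k)
    (hint : ∀ k : ℕ, ∀ n ≤ k, ∀ i j,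
      IsIntegral ℤ ((ψ k : K) * fall A n i j / (n.factorial : K)))
    (hlim : Filter.limsup (fun k => (ψ k : ℝ) ^ (1 / (k : ℝ))) Filter.atTop ≤ Ψ) :
    ∃ ψ' : ℕ → ℕ, (∀ k, 0 < ψ' k) ∧
      (∀ k : ℕ, ∀ n ≤ k, ∀ i j,
        IsIntegral ℤ ((ψ' k : K) * fall (T * A * T⁻¹) n i j / (n.factorial : K))) ∧
      Filter.limsup (fun k => (ψ' k : ℝ) ^ (1 / (k : ℝ))) Filter.atTop ≤ Ψ := by
  obtain ⟨d₁, hd₁pos, hd₁⟩ := exists_denom T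
  obtain ⟨d₂, hd₂pos, hd₂⟩ := exists_denom T⁻¹
  refine ⟨fun k => d₁ * d₂ * ψ k, fun k => by have := hpos k; positivity, ?_, ?_⟩
  · intro k n hn i j
    have hfac : (n.factorial : K) ≠ 0 := Nat.cast_ne_zero.2 n.factorial_ne_zero
    have expand : ((d₁ * d₂ * ψ k : ℕ) : K) * fall (T * A * T⁻¹) n i j / (n.factorial : K)
        = ∑ b, ∑ a, ((d₁ : K) * T i a) * ((ψ k : K) * fall A n a b / (n.factorial : K))
            * ((d₂ : K) * T⁻¹ b j) := by
      rw [fall_conj A T hT n]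
      simp only [Matrix.mul_apply, Finset.sum_mul, Finset.mul_sum, Finset.sum_div]
      refine Finset.sum_congr rfl fun b _ => Finset.sum_congr rfl fun a _ => ?_
      push_cast
      field_simp
    rw [expand]
    refine IsIntegral.sum _ fun b _ => IsIntegral.sum _ fun a _ => ?_
    exact ((hd₁ i a).mul (hint k n hn a b)).mul (hd₂ b j)
  · set u : ℕ → ℝ := fun k => ((d₁ * d₂ * ψ k : ℕ) : ℝ) ^ (1 / (k : ℝ)) with hu
    set c : ℝ := (d₁ : ℝ) * (d₂ : ℝ) with hc
    have hc1 : 1 ≤ c := by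
      have : (1 : ℝ) * 1 ≤ c := by
        apply mul_le_mul <;> simp [Nat.one_le_cast, hd₁pos, hd₂pos, Nat.succ_le_of_lt]
      simpa using this
    have hc0 : 0 < c := lt_of_lt_of_le one_pos hc1
    have husplit : ∀ k : ℕ, u k = c ^ (1 / (k : ℝ)) * ((ψ k : ℝ)) ^ (1 / (k : ℝ)) := by
      intro k
      rw [hu]
      push_cast
      rw [← Real.mul_rpow (by positivity) (by positivity)]
    by_cases hb : Filter.IsBoundedUnder (· ≤ ·) Filter.atTop u
    · have hb' : Filter.IsBoundedUnder (· ≤ ·) Filter.atTop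
          (fun k => ((ψ k : ℝ)) ^ (1 / (k : ℝ))) := by
        obtain ⟨b, hbb⟩ := hb
        refine ⟨b, ?_⟩
        rw [Filter.eventually_map] at hbb ⊢
        filter_upwards [hbb] with k hk
        refine le_trans ?_ hk
        rw [hu]
        apply Real.rpow_le_rpow (by positivity) ?_ (by positivity)
        push_cast
        have e1 : (1 : ℝ) ≤ (d₁ : ℝ) := by exact_mod_cast hd₁pos
        have e2 : (1 : ℝ) ≤ (d₂ : ℝ) := by exact_mod_cast hd₂pos
        have e3 : (0 : ℝ) ≤ ((ψ k : ℕ) : ℝ) := by positivity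
        nlinarith
      refine le_of_forall_gt_imp_ge_of_dense fun x hx => ?_
      obtain ⟨y, hy1, hy2⟩ := exists_between hx
      have hy0 : 0 < y := by linarith
      have h1 : ∀ᶠ k in Filter.atTop, ((ψ k : ℝ)) ^ (1 / (k : ℝ)) < y :=
        Filter.eventually_lt_of_limsup_lt (lt_of_le_of_lt hlim hy1) hb'
      have hxy : 1 < x / y := (one_lt_div hy0).2 hy2
      have h2 : ∀ᶠ k : ℕ in Filter.atTop, c ^ (1 / (k : ℝ)) < x / y :=
        (tendsto_const_rpow_one_div c hc0).eventually_lt_const hxy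
      refine Filter.limsup_le_of_le
        (Filter.isCoboundedUnder_le_of_le _ (x := 0) fun k => by positivity) ?_
      filter_upwards [h1, h2] with k hk1 hk2
      rw [husplit k]
      have hlt : c ^ (1 / (k : ℝ)) * ((ψ k : ℝ)) ^ (1 / (k : ℝ)) < (x / y) * y :=
        mul_lt_mul'' hk2 hk1 (by positivity) (by positivity)
      rw [div_mul_cancel₀ _ (ne_of_gt hy0)] at hlt
      exact le_of_lt hlt
    · rw [Filter.limsup_eq]
      have hempty : {a : ℝ | ∀ᶠ n in Filter.atTop, u n ≤ a} = ∅ := by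
        rw [Set.eq_empty_iff_forall_notMem]
        intro a ha
        exact hb ⟨a, Filter.eventually_map.2 ha⟩
      rw [hempty, Real.sInf_empty]
      linarith
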